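/- Let w₀, w₁ : ℝ² × ℝ² → ℝ be measurable kernels, both symmetric of positive type, such that w₁ − w₀ is also of positive type and w₁(x,x) − w₀(x,x) ≤ K for all x ∈ ℝ² and some K ≥ 0. Let g : ℝ² → [0,∞) be measurable, let a ∈ ℝ, and assume the finiteness condition holds for each of the kernels w₀ and w₁. Then Ξ(w₁,g,a) ≤ 2·Ξ(w₀, 2·e^{a²K/2}·g, a), the inequality taken in [0,∞]. -/

import Mathlib

open MeasureTheory Finset
open scoped ENNReal

/-- A kernel on `ℝ² × ℝ²` is symmetric of positive type. -/
def IsSymPosType (w : (ℝ × ℝ) → (ℝ × ℝ) → ℝ) : Prop :=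
  (∀ x y, w x y = w y x) ∧
  ∀ (k : ℕ) (z : Fin k → ℝ × ℝ) (c : Fin k → ℝ),
    0 ≤ ∑ i : Fin k, ∑ j : Fin k, c i * c j * w (z i) (z j)

/-- `Q_n(w,g,a)`: the expectation value at the zero field configuration of the
`n`-th power of the smeared cosine vertex operator. -/
noncomputable def Qpart (w : (ℝ × ℝ) → (ℝ × ℝ) → ℝ) (g : ℝ × ℝ → ℝ) (a : ℝ)
    (n : ℕ) : ℝ≥0∞ :=
  (2 : ℝ≥0∞)⁻¹ ^ n *
    ∑ ε : Fin n → Bool,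
      ∫⁻ x : Fin n → ℝ × ℝ,
        ENNReal.ofReal
          (Real.exp (-(a ^ 2) * ∑ i : Fin n, ∑ j ∈ Ioi i,
              (if ε i then (1 : ℝ) else -1) * (if ε j then (1 : ℝ) else -1) *
                w (x i) (x j)) *
            ∏ i : Fin n, g (x i))

/-- The generating series `Ξ(w,g,a) = Σ_{n≥0} Q_n(w,g,a)/n!`. -/
noncomputable def Xi (w : (ℝ × ℝ) → (ℝ × ℝ) → ℝ) (g : ℝ × ℝ → ℝ) (a : ℝ) : ℝ≥0∞ :=
  ∑' n : ℕ, Qpart w g a n / (n.factorial : ℝ≥0∞)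

/-- The finiteness condition for a kernel `w` and a confinement `g`. -/
def FinCond (w : (ℝ × ℝ) → (ℝ × ℝ) → ℝ) (g : ℝ × ℝ → ℝ) (a : ℝ) : Prop :=
  ∀ k : ℕ,
    (∫⁻ z : Fin k → ℝ × ℝ,
      ENNReal.ofReal
        (Real.exp (a ^ 2 * ∑ i : Fin k, ∑ j ∈ Ioi i, |w (z i) (z j)|) *
          ∏ i : Fin k, g (z i))) < ⊤

/-- Inverse conditioning for the generating series: if `w₁ − w₀` is of positive
type with diagonal bounded by `K`, then `Ξ(w₁,g,a) ≤ 2·Ξ(w₀, 2e^{a²K/2}·g, a)`. -/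
private lemma sum_decomp {n : ℕ} (f : Fin n → Fin n → ℝ) (hsym : ∀ i j, f i j = f j i) :
    ∑ i : Fin n, ∑ j : Fin n, f i j
      = (∑ i : Fin n, f i i) + 2 * ∑ i : Fin n, ∑ j ∈ Ioi i, f i j := by
  have h := Finset.sum_sum_Ioi_add_eq_sum_sum_off_diag f
  have h2 : ∀ i : Fin n, ∑ j : Fin n, f i j = f i i + ∑ j ∈ ({i} : Finset (Fin n))ᶜ, f j i := by
    intro i
    rw [← Finset.sum_compl_add_sum ({i} : Finset (Fin n)) (f i)]
    simp only [Finset.sum_singleton]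
    rw [add_comm]
    congr 1
    exact Finset.sum_congr rfl fun j _ => hsym i j
  calc ∑ i : Fin n, ∑ j : Fin n, f i j
      = ∑ i : Fin n, (f i i + ∑ j ∈ ({i} : Finset (Fin n))ᶜ, f j i) :=
        Finset.sum_congr rfl fun i _ => h2 i
    _ = (∑ i : Fin n, f i i) + ∑ i : Fin n, ∑ j ∈ ({i} : Finset (Fin n))ᶜ, f j i :=
        Finset.sum_add_distrib
    _ = (∑ i : Fin n, f i i) + ∑ i : Fin n, ∑ j ∈ Ioi i, (f j i + f i j) := by
        rw [h]
    _ = (∑ i : Fin n, f i i) + 2 * ∑ i : Fin n, ∑ j ∈ Ioi i, f i j := by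
        congr 1
        rw [two_mul, ← Finset.sum_add_distrib]
        refine Finset.sum_congr rfl fun i _ => ?_
        rw [← Finset.sum_add_distrib]
        exact Finset.sum_congr rfl fun j _ => by rw [hsym i j]


theorem statement13 (a K : ℝ) (hK : 0 ≤ K)
    (w₀ w₁ : (ℝ × ℝ) → (ℝ × ℝ) → ℝ)
    (hw₀meas : Measurable fun z : (ℝ × ℝ) × (ℝ × ℝ) => w₀ z.1 z.2)
    (hw₁meas : Measurable fun z : (ℝ × ℝ) × (ℝ × ℝ) => w₁ z.1 z.2)
    (hw₀ : IsSymPosType w₀) (hw₁ : IsSymPosType w₁)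
    (hdiffpos : ∀ (k : ℕ) (z : Fin k → ℝ × ℝ) (c : Fin k → ℝ),
      0 ≤ ∑ i : Fin k, ∑ j : Fin k, c i * c j * (w₁ (z i) (z j) - w₀ (z i) (z j)))
    (hdiag : ∀ x, w₁ x x - w₀ x x ≤ K)
    (g : ℝ × ℝ → ℝ) (hgmeas : Measurable g) (hg0 : ∀ x, 0 ≤ g x)
    (hfin₀ : FinCond w₀ g a) (hfin₁ : FinCond w₁ g a) :
    Xi w₁ g a ≤ 2 * Xi w₀ (fun x => 2 * Real.exp (a ^ 2 * K / 2) * g x) a := by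
  have key : Xi w₁ g a ≤ Xi w₀ (fun x => 2 * Real.exp (a ^ 2 * K / 2) * g x) a := by
    refine ENNReal.tsum_le_tsum fun n => ?_
    refine ENNReal.div_le_div_right ?_ _
    unfold Qpart
    refine mul_le_mul_right (Finset.sum_le_sum fun ε _ => lintegral_mono fun x => ?_) _
    refine ENNReal.ofReal_le_ofReal ?_
    set c : Fin n → ℝ := fun i => if ε i then (1 : ℝ) else -1 with hc
    have hcsq : ∀ i, c i * c i = 1 := by
      intro i; by_cases h : ε i <;> simp [hc, h]
    -- the cross-term bound
    have hd := hdiffpos n x c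
    have hdec' := sum_decomp (fun i j => c i * c j * (w₁ (x i) (x j) - w₀ (x i) (x j)))
      (fun i j =>
        show c i * c j * (w₁ (x i) (x j) - w₀ (x i) (x j))
            = c j * c i * (w₁ (x j) (x i) - w₀ (x j) (x i)) by
          rw [hw₁.1 (x i) (x j), hw₀.1 (x i) (x j)]; ring)
    have hdec : ∑ i : Fin n, ∑ j : Fin n, c i * c j * (w₁ (x i) (x j) - w₀ (x i) (x j))
        = (∑ i : Fin n, c i * c i * (w₁ (x i) (x i) - w₀ (x i) (x i)))
          + 2 * ∑ i : Fin n, ∑ j ∈ Ioi i, c i * c j * (w₁ (x i) (x j) - w₀ (x i) (x j)) := hdec'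
    have hdiagsum : ∑ i : Fin n, c i * c i * (w₁ (x i) (x i) - w₀ (x i) (x i)) ≤ n * K := by
      calc ∑ i : Fin n, c i * c i * (w₁ (x i) (x i) - w₀ (x i) (x i))
          ≤ ∑ _i : Fin n, K :=
            Finset.sum_le_sum fun i _ => by rw [hcsq i, one_mul]; exact hdiag (x i)
        _ = n * K := by simp [mul_comm]
    have hcross : -((n : ℝ) * K) / 2
        ≤ ∑ i : Fin n, ∑ j ∈ Ioi i, c i * c j * (w₁ (x i) (x j) - w₀ (x i) (x j)) := by
      rw [hdec] at hd
      linarith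
    -- exponent comparison
    have hexp : -(a ^ 2) * ∑ i : Fin n, ∑ j ∈ Ioi i, c i * c j * w₁ (x i) (x j)
        ≤ -(a ^ 2) * (∑ i : Fin n, ∑ j ∈ Ioi i, c i * c j * w₀ (x i) (x j))
          + (n : ℝ) * (a ^ 2 * K / 2) := by
      have hsplit : ∑ i : Fin n, ∑ j ∈ Ioi i, c i * c j * w₁ (x i) (x j)
          = (∑ i : Fin n, ∑ j ∈ Ioi i, c i * c j * w₀ (x i) (x j))
            + ∑ i : Fin n, ∑ j ∈ Ioi i, c i * c j * (w₁ (x i) (x j) - w₀ (x i) (x j)) := by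
        rw [← Finset.sum_add_distrib]
        refine Finset.sum_congr rfl fun i _ => ?_
        rw [← Finset.sum_add_distrib]
        exact Finset.sum_congr rfl fun j _ => by ring
      rw [hsplit]
      have ha2 : (0 : ℝ) ≤ a ^ 2 := sq_nonneg a
      nlinarith [hcross, mul_le_mul_of_nonneg_left hcross ha2]
    -- assemble
    have hprod : (0 : ℝ) ≤ ∏ i : Fin n, g (x i) := Finset.prod_nonneg fun i _ => hg0 (x i)
    calc Real.exp (-(a ^ 2) * ∑ i : Fin n, ∑ j ∈ Ioi i, c i * c j * w₁ (x i) (x j))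
          * ∏ i : Fin n, g (x i)
        ≤ (Real.exp (-(a ^ 2) * (∑ i : Fin n, ∑ j ∈ Ioi i, c i * c j * w₀ (x i) (x j)))
            * Real.exp ((n : ℝ) * (a ^ 2 * K / 2))) * ∏ i : Fin n, g (x i) := by
          refine mul_le_mul_of_nonneg_right ?_ hprod
          rw [← Real.exp_add]
          exact Real.exp_le_exp.2 hexp
      _ ≤ Real.exp (-(a ^ 2) * (∑ i : Fin n, ∑ j ∈ Ioi i, c i * c j * w₀ (x i) (x j)))
            * ∏ i : Fin n, (2 * Real.exp (a ^ 2 * K / 2) * g (x i)) := by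
          rw [mul_assoc]
          refine mul_le_mul_of_nonneg_left ?_ (Real.exp_nonneg _)
          calc Real.exp ((n : ℝ) * (a ^ 2 * K / 2)) * ∏ i : Fin n, g (x i)
              = ∏ i : Fin n, (Real.exp (a ^ 2 * K / 2) * g (x i)) := by
                rw [Finset.prod_mul_distrib, Finset.prod_const, Finset.card_univ,
                  Fintype.card_fin, ← Real.exp_nat_mul]
            _ ≤ ∏ i : Fin n, (2 * Real.exp (a ^ 2 * K / 2) * g (x i)) := by
                refine Finset.prod_le_prod (fun i _ => mul_nonneg (Real.exp_nonneg _) (hg0 _))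
                  (fun i _ => ?_)
                nlinarith [Real.exp_nonneg (a ^ 2 * K / 2), hg0 (x i),
                  mul_nonneg (Real.exp_nonneg (a ^ 2 * K / 2)) (hg0 (x i))]
  calc Xi w₁ g a ≤ Xi w₀ (fun x => 2 * Real.exp (a ^ 2 * K / 2) * g x) a := key
    _ ≤ 2 * Xi w₀ (fun x => 2 * Real.exp (a ^ 2 * K / 2) * g x) a :=
        le_mul_of_one_le_left zero_le one_le_two
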